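/- Let B be a C*-algebra. The following are equivalent: (i) B contains no non-zero projection p with pBp = ℂ·p; (iii) for every pair of non-zero a₁, a₂ ∈ B₊ and every c ∈ B there exist non-zero b₁, b₂ ∈ B₊ with b₁ c b₂ = 0, b₁ ≤ a₁ and b₂ ≤ a₂. -/

import Mathlib

set_option maxHeartbeats 1000000

open scoped CStarAlgebra

section Aux

set_option linter.unusedVariables false
set_option linter.unusedSectionVars false

variable {B : Type*} [NonUnitalCStarAlgebra B] [PartialOrder B] [StarOrderedRing B]

/-- If `0 ≤ e` and `star x * e * x = 0` then `e * x = 0`. -/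
lemma stmt12_cancel {e x : B} (he : 0 ≤ e) (h : star x * e * x = 0) : e * x = 0 := by
  have hs : (0:B) ≤ CFC.sqrt e := CFC.sqrt_nonneg (a := e)
  have h1 : star (CFC.sqrt e * x) * (CFC.sqrt e * x) = 0 := by
    rw [star_mul, hs.isSelfAdjoint.star_eq, show star x * CFC.sqrt e * (CFC.sqrt e * x)
        = star x * (CFC.sqrt e * CFC.sqrt e) * x by noncomm_ring,
      CFC.sqrt_mul_sqrt_self e he]
    exact h
  have h2 := (CStarRing.star_mul_self_eq_zero_iff _).mp h1
  rw [show e * x = CFC.sqrt e * (CFC.sqrt e * x) by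
    rw [← mul_assoc, CFC.sqrt_mul_sqrt_self e he], h2, mul_zero]

lemma stmt12_norm_mem {k : B} (hk : 0 ≤ k) : ‖k‖ ∈ quasispectrum ℝ k := by
  rw [Unitization.quasispectrum_eq_spectrum_inr' ℝ ℂ k]
  have : (0:Unitization ℂ B) ≤ (k : Unitization ℂ B) := Unitization.inr_nonneg_iff.mpr hk
  simpa [Unitization.norm_inr] using CStarAlgebra.norm_mem_spectrum_of_nonneg this

lemma stmt12_mem_le {k : B} (hk : 0 ≤ k) {μ : ℝ} (h : μ ∈ quasispectrum ℝ k) :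
    0 ≤ μ ∧ μ ≤ ‖k‖ := by
  refine ⟨quasispectrum_nonneg_of_nonneg k hk μ h, ?_⟩
  have h0 := quasispectrum_nonneg_of_nonneg k hk μ h
  rw [Unitization.quasispectrum_eq_spectrum_inr' ℝ ℂ k] at h
  have := spectrum.norm_le_norm_of_mem h
  rwa [Unitization.norm_inr, Real.norm_of_nonneg h0] at this

/-- Absorption: if `0 ≤ e ≤ t` and `t` is absorbed by a projection `p`, then so is `e`. -/
lemma stmt12_absorb {p t e : B} (hp : IsSelfAdjoint p) (hpi : IsIdempotentElem p)
    (ht : IsSelfAdjoint t) (he : 0 ≤ e) (het : e ≤ t)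
    (htp : t * p = t) (hpt : p * t = t) : e * p = e := by
  let P : B⁺¹ := (p : B⁺¹)
  let q : B⁺¹ := 1 - P
  have hq : IsSelfAdjoint q := by
    have : IsSelfAdjoint P := hp.inr ℂ
    simpa [q] using (IsSelfAdjoint.one (R := B⁺¹)).sub this
  have hqtq : q * (t : B⁺¹) * q = 0 := by
    have h1 : P * (t : B⁺¹) = (t : B⁺¹) := by
      rw [show P = ((p : B) : B⁺¹) from rfl, ← Unitization.inr_mul, hpt]
    have h2 : (t : B⁺¹) * P = (t : B⁺¹) := by
      rw [show P = ((p : B) : B⁺¹) from rfl, ← Unitization.inr_mul, htp]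
    simp [q, sub_mul, mul_sub, h1, h2]
  have he' : (0:B⁺¹) ≤ (e : B⁺¹) := Unitization.inr_nonneg_iff.mpr he
  have het' : (e : B⁺¹) ≤ (t : B⁺¹) :=
    (Unitization.inr_le_iff e t he.isSelfAdjoint ht).mpr het
  have hle : q * (e : B⁺¹) * q ≤ 0 := by
    calc q * (e : B⁺¹) * q = star q * (e : B⁺¹) * q := by rw [hq.star_eq]
      _ ≤ star q * (t : B⁺¹) * q := star_left_conjugate_le_conjugate het' q
      _ = 0 := by rw [hq.star_eq, hqtq]
  have hge : (0:B⁺¹) ≤ q * (e : B⁺¹) * q := by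
    have := star_left_conjugate_nonneg he' q
    rwa [hq.star_eq] at this
  have h0 : star q * (e : B⁺¹) * q = 0 := by rw [hq.star_eq]; exact le_antisymm hle hge
  have h1 : (e : B⁺¹) * q = 0 := stmt12_cancel he' h0
  have h2 : (e : B⁺¹) * P = (e : B⁺¹) := by
    have : (e : B⁺¹) * (1 - P) = 0 := h1
    rw [mul_sub, mul_one, sub_eq_zero] at this
    exact this.symm
  have : ((e * p : B) : B⁺¹) = ((e : B) : B⁺¹) := by
    rw [Unitization.inr_mul]; exact h2
  exact Unitization.inr_injective (R := ℂ) this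


lemma stmt12_pcase (d p e e' : B) (β : ℝ) (hβ : β ≠ 0)
    (hdp : star d * d = β • p)
    (he : 0 ≤ e) (hene : e ≠ 0) (he' : 0 ≤ e') (he'ne : e' ≠ 0)
    (h_ee' : e' * e = 0) (hep : e * p = e) (hpe : p * e = e)
    (he'p : e' * p = e') (hpe' : p * e' = e') :
    ∃ E E' : B, 0 ≤ E ∧ 0 ≤ E' ∧ E' * (d * E) = 0 ∧ E * star d ≠ 0 ∧ E' * d ≠ 0 := by
  have hstar : star (d * e') = e' * star d := by
    rw [star_mul, he'.isSelfAdjoint.star_eq]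
  refine ⟨e, (d * e') * star (d * e'), he, mul_star_self_nonneg _, ?_, ?_, ?_⟩
  · calc (d * e') * star (d * e') * (d * e)
        = d * (e' * (e' * ((star d * d) * e))) := by rw [hstar]; noncomm_ring
      _ = d * (e' * (e' * ((β • p) * e))) := by rw [hdp]
      _ = β • (d * (e' * (e' * (p * e)))) := by
          rw [smul_mul_assoc]; simp only [mul_smul_comm]
      _ = 0 := by rw [hpe, h_ee', mul_zero, mul_zero, smul_zero]
  · intro hcon
    have h1 : e * (star d * d) = 0 := by rw [← mul_assoc, hcon, zero_mul]
    rw [hdp, mul_smul_comm, hep] at h1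
    rcases smul_eq_zero.mp h1 with h | h
    · exact hβ h
    · exact hene h
  · intro hcon
    have h1 : (d * e') * star (d * e') * d = β • (d * (e' * e')) := by
      calc (d * e') * star (d * e') * d
          = d * (e' * (e' * (star d * d))) := by rw [hstar]; noncomm_ring
        _ = d * (e' * (e' * (β • p))) := by rw [hdp]
        _ = β • (d * (e' * (e' * p))) := by simp only [mul_smul_comm]
        _ = β • (d * (e' * e')) := by rw [he'p]
    rw [hcon] at h1
    have h2 : d * (e' * e') = 0 := by
      rcases smul_eq_zero.mp h1.symm with h | h
      · exact absurd h hβ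
      · exact h
    have h3 : (β : ℝ) • (e' * e') = 0 := by
      calc (β : ℝ) • (e' * e') = (β • p) * (e' * e') := by
            rw [smul_mul_assoc, ← mul_assoc, hpe']
        _ = star d * (d * (e' * e')) := by rw [← hdp, mul_assoc]
        _ = 0 := by rw [h2, mul_zero]
    have h4 : e' * e' = 0 := by
      rcases smul_eq_zero.mp h3 with h | h
      · exact absurd h hβ
      · exact h
    exact he'ne <| (CStarRing.star_mul_self_eq_zero_iff e').mp
      (by rw [he'.isSelfAdjoint.star_eq]; exact h4)

lemma stmt12_smul_le {r : ℝ} (hr : 0 ≤ r) {x y : B} (hxy : x ≤ y) : r • x ≤ r • y := by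
  rw [← sub_nonneg, ← smul_sub]
  exact smul_nonneg hr (sub_nonneg.mpr hxy)

lemma stmt12_sq_le {a : B} (ha : 0 ≤ a) : a * a ≤ ‖a‖ • a := by
  have h1 : a * a = cfcₙ (fun x : ℝ => x * x) a := by
    rw [cfcₙ_mul (fun x : ℝ => x) (fun x : ℝ => x) a, cfcₙ_id' ℝ a]
  have h2 : cfcₙ (fun x : ℝ => ‖a‖ * x) a = ‖a‖ • a := by
    have : (fun x : ℝ => ‖a‖ * x) = fun x : ℝ => ‖a‖ • x := by funext x; simp
    rw [this, cfcₙ_smul_id ‖a‖ a]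
  rw [h1, ← h2]
  refine cfcₙ_mono fun x hx => ?_
  have h3 : 0 ≤ x := quasispectrum_nonneg_of_nonneg a ha x hx
  have h4 : x ≤ ‖a‖ := by
    rw [Unitization.quasispectrum_eq_spectrum_inr' ℝ ℂ a] at hx
    have := spectrum.norm_le_norm_of_mem hx
    rwa [Unitization.norm_inr, Real.norm_of_nonneg h3] at this
  nlinarith

lemma stmt12_shrink {a E : B} (ha : 0 ≤ a) (hE : 0 ≤ E) (haE : a * E * a ≠ 0) :
    ∃ r : ℝ, 0 < r ∧ r • (a * E * a) ≤ a := by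
  have haz : a ≠ 0 := by rintro rfl; simp at haE
  have hEz : E ≠ 0 := by rintro rfl; simp at haE
  set s : ℝ := ‖E‖ * ‖a‖ with hs
  have hs0 : 0 < s := mul_pos (norm_pos_iff.mpr hEz) (norm_pos_iff.mpr haz)
  refine ⟨s⁻¹, by positivity, ?_⟩
  have h1 : a * E * a ≤ ‖E‖ • (a * a) := by
    have := CStarAlgebra.star_left_conjugate_le_norm_smul (a := a) (b := E) hE.isSelfAdjoint
    rwa [ha.isSelfAdjoint.star_eq] at this
  have h2 : a * E * a ≤ s • a := by
    refine h1.trans ?_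
    rw [hs, mul_smul]
    exact stmt12_smul_le (norm_nonneg E) (stmt12_sq_le ha)
  calc s⁻¹ • (a * E * a) ≤ s⁻¹ • (s • a) := stmt12_smul_le (by positivity) h2
    _ = a := by rw [smul_smul, inv_mul_cancel₀ hs0.ne', one_smul]

lemma stmt12_vanish {k : B} (hk : IsSelfAdjoint k) {φ : ℝ → ℝ} (hφc : Continuous φ)
    (hφ0 : φ 0 = 0) (h : cfcₙ φ k = 0) {μ : ℝ} (hμ : μ ∈ quasispectrum ℝ k) : φ μ = 0 := by
  have h' : cfcₙ φ k = cfcₙ (0 : ℝ → ℝ) k := by rw [h, cfcₙ_zero]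
  exact eqOn_of_cfcₙ_eq_cfcₙ h' hk hφc.continuousOn hφ0 continuous_zero.continuousOn rfl hμ

lemma stmt12_fg {μ βv : ℝ} (h0 : 0 < μ) (h : μ < βv) :
    ∃ f g : ℝ → ℝ, Continuous f ∧ Continuous g ∧ f 0 = 0 ∧ g 0 = 0 ∧
      (∀ x, 0 ≤ f x) ∧ (∀ x, 0 ≤ g x) ∧ (∀ x, f x * g x = 0) ∧ 0 < f μ ∧ 0 < g βv ∧
      (∀ x, 0 ≤ x → f x ≤ x) ∧ (∀ x, 0 ≤ x → g x ≤ x) := by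
  set t : ℝ := (μ + βv) / 2 with ht
  have ht0 : 0 < t := by rw [ht]; linarith
  have hμt : μ < t := by rw [ht]; linarith
  have htβ : t < βv := by rw [ht]; linarith
  refine ⟨fun x => min (max x 0) (max (t - x) 0), fun x => max (x - t) 0,
    by fun_prop, by fun_prop, ?_, ?_, ?_, ?_, ?_, ?_, ?_, ?_, ?_⟩
  · simp [ht0.le]
  · simp [ht0.le]
  · intro x; exact le_min (le_max_right _ _) (le_max_right _ _)
  · intro x; exact le_max_right _ _
  · intro x
    simp only
    rcases le_or_gt x t with hx | hx
    · have h1 : max (x - t) 0 = 0 := by simp [sub_nonpos.mpr hx]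
      rw [h1, mul_zero]
    · have h1 : max (t - x) 0 = 0 := by simp [sub_nonpos.mpr hx.le]
      rw [h1, min_eq_right (le_max_right _ _), zero_mul]
  · simp only
    have h1 : max μ 0 = μ := max_eq_left h0.le
    have h2 : max (t - μ) 0 = t - μ := max_eq_left (by linarith)
    rw [h1, h2]
    exact lt_min h0 (by linarith)
  · simp only
    exact lt_max_of_lt_left (by linarith)
  · intro x hx
    exact le_trans (min_le_left _ _) (by simp [hx])
  · intro x hx
    exact max_le (by linarith) hx

/-- Case A of the core construction. -/
lemma stmt12_caseA (d : B)
    (hA : ∃ μ ∈ quasispectrum ℝ (star d * d), 0 < μ ∧ μ < ‖star d * d‖) :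
    ∃ E E' : B, 0 ≤ E ∧ 0 ≤ E' ∧ E' * (d * E) = 0 ∧ E * star d ≠ 0 ∧ E' * d ≠ 0 := by
  set k : B := star d * d with hkdef
  have hk : 0 ≤ k := star_mul_self_nonneg d
  have hksa : IsSelfAdjoint k := hk.isSelfAdjoint
  obtain ⟨μ, hμσ, hμ0, hμβ⟩ := hA
  set β : ℝ := ‖k‖ with hβdef
  have hβ0 : 0 < β := lt_trans hμ0 hμβ
  have hβσ : β ∈ quasispectrum ℝ k := by
    rw [Unitization.quasispectrum_eq_spectrum_inr' ℝ ℂ]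
    have h0 : (0:Unitization ℂ B) ≤ (k : Unitization ℂ B) := Unitization.inr_nonneg_iff.mpr hk
    simpa [Unitization.norm_inr] using CStarAlgebra.norm_mem_spectrum_of_nonneg h0
  obtain ⟨f, g, hfc, hgc, hf0, hg0, hfnn, hgnn, hfg, hfμ, hgβ, hfle, hgle⟩ := stmt12_fg hμ0 hμβ
  set F : B := cfcₙ f k with hF
  set E : B := cfcₙ g k with hE
  have hFsa : IsSelfAdjoint F := (cfcₙ_nonneg (A := B) (f := f) (a := k)
    (fun x _ => hfnn x)).isSelfAdjoint
  have hstar : star (d * F) = F * star d := by rw [star_mul, hFsa.star_eq]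
  -- the key products
  have e1 : cfcₙ (fun x : ℝ => x * g x) k = k * E := by
    rw [cfcₙ_mul (fun x : ℝ => x) g k (by fun_prop) rfl hgc.continuousOn hg0,
      cfcₙ_id' ℝ k hksa]
  have e2 : cfcₙ (fun x : ℝ => f x * (x * g x)) k = F * (k * E) := by
    rw [cfcₙ_mul f (fun x : ℝ => x * g x) k hfc.continuousOn hf0 (by fun_prop) (by simp [hg0]), e1]
  have e3 : cfcₙ (fun x : ℝ => f x * (f x * (x * g x))) k = F * (F * (k * E)) := by
    rw [cfcₙ_mul f (fun x : ℝ => f x * (x * g x)) k hfc.continuousOn hf0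
      (by fun_prop) (by simp [hg0]), e2]
  have hmulFFkE : F * (F * (k * E)) = 0 := by
    rw [← e3]
    have h4 : (fun x : ℝ => f x * (f x * (x * g x))) = (fun _ : ℝ => (0:ℝ)) := by
      funext x
      have h5 : f x * (f x * (x * g x)) = (f x * g x) * (f x * x) := by ring
      rw [h5, hfg x, zero_mul]
    rw [h4, cfcₙ_const_zero]
  refine ⟨E, (d * F) * star (d * F), cfcₙ_nonneg (fun x _ => hgnn x),
    mul_star_self_nonneg _, ?_, ?_, ?_⟩
  · calc (d * F) * star (d * F) * (d * E)
        = d * (F * (F * ((star d * d) * E))) := by rw [hstar]; noncomm_ring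
      _ = d * (F * (F * (k * E))) := by rw [← hkdef]
      _ = 0 := by rw [hmulFFkE, mul_zero]
  · intro hcon
    have h1 : E * k = 0 := by rw [hkdef, ← mul_assoc, hcon, zero_mul]
    have h2 : cfcₙ (fun x : ℝ => g x * x) k = E * k := by
      rw [cfcₙ_mul g (fun x : ℝ => x) k hgc.continuousOn hg0 (by fun_prop) rfl,
        cfcₙ_id' ℝ k hksa]
    rw [← h2] at h1
    have h3 := stmt12_vanish hksa (by fun_prop) (by simp [hg0]) h1 hβσ
    have h4 : 0 < g β * β := mul_pos hgβ hβ0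
    exact absurd h3 h4.ne'
  · intro hcon
    have h1 : d * (F * (F * k)) = 0 := by
      have h2 : (d * F) * star (d * F) * d = d * (F * (F * (star d * d))) := by
        rw [hstar]; noncomm_ring
      rw [← hkdef] at h2
      rw [← h2, hcon]
    have h3 : k * (F * (F * k)) = 0 := by
      rw [hkdef, mul_assoc, h1, mul_zero]
    have e4 : cfcₙ (fun x : ℝ => f x * x) k = F * k := by
      rw [cfcₙ_mul f (fun x : ℝ => x) k hfc.continuousOn hf0 (by fun_prop) rfl,
        cfcₙ_id' ℝ k hksa]
    have e5 : cfcₙ (fun x : ℝ => f x * (f x * x)) k = F * (F * k) := by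
      rw [cfcₙ_mul f (fun x : ℝ => f x * x) k hfc.continuousOn hf0
        (by fun_prop) (by simp [hf0]), e4]
    have e6 : cfcₙ (fun x : ℝ => x * (f x * (f x * x))) k = k * (F * (F * k)) := by
      rw [cfcₙ_mul (fun x : ℝ => x) (fun x : ℝ => f x * (f x * x)) k (by fun_prop) rfl
        (by fun_prop) (by simp [hf0]), cfcₙ_id' ℝ k hksa, e5]
    rw [← e6] at h3
    have h6 := stmt12_vanish hksa (by fun_prop) (by simp [hf0]) h3 hμσ
    have h7 : 0 < μ * (f μ * (f μ * μ)) := by positivity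
    exact absurd h6 h7.ne'

lemma stmt12_caseB
    (hmin : ∀ p : B, p ≠ 0 → IsSelfAdjoint p → IsIdempotentElem p →
      ∃ x : B, ∀ c : ℂ, p * x * p ≠ c • p)
    (d : B) (hd : d ≠ 0)
    (hB : ∀ μ ∈ quasispectrum ℝ (star d * d), 0 < μ → ‖star d * d‖ ≤ μ) :
    ∃ E E' : B, 0 ≤ E ∧ 0 ≤ E' ∧ E' * (d * E) = 0 ∧ E * star d ≠ 0 ∧ E' * d ≠ 0 := by
  set k : B := star d * d with hkdef
  have hk : 0 ≤ k := star_mul_self_nonneg d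
  have hksa : IsSelfAdjoint k := hk.isSelfAdjoint
  have hkne : k ≠ 0 := fun h => hd ((CStarRing.star_mul_self_eq_zero_iff d).mp h)
  set β : ℝ := ‖k‖ with hβdef
  have hβ0 : 0 < β := norm_pos_iff.mpr hkne
  have hspec : ∀ μ ∈ quasispectrum ℝ k, μ = 0 ∨ μ = β := by
    intro μ hμ
    obtain ⟨h1, h2⟩ := stmt12_mem_le hk hμ
    rcases eq_or_lt_of_le h1 with h | h
    · exact Or.inl h.symm
    · exact Or.inr (le_antisymm h2 (hB μ hμ h))
  have hkk : k * k = β • k := by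
    have h1 : cfcₙ (fun x : ℝ => x * x) k = k * k := by
      rw [cfcₙ_mul (fun x : ℝ => x) (fun x : ℝ => x) k (by fun_prop) rfl (by fun_prop) rfl,
        cfcₙ_id' ℝ k hksa]
    have h2 : cfcₙ (fun x : ℝ => β * x) k = β • k := by
      have h3 : (fun x : ℝ => β * x) = fun x : ℝ => β • x := by funext x; simp
      rw [h3, cfcₙ_smul_id β k]
    rw [← h1, ← h2]
    refine cfcₙ_congr fun μ hμ => ?_
    rcases hspec μ hμ with h | h <;> simp [h]
  set p : B := β⁻¹ • k with hpdef
  have hpsa : IsSelfAdjoint p := by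
    rw [IsSelfAdjoint, hpdef, star_smul, star_trivial, hksa.star_eq]
  have hpidem : IsIdempotentElem p := by
    show p * p = p
    rw [hpdef, smul_mul_assoc, mul_smul_comm, hkk, smul_smul, smul_smul]
    congr 1
    field_simp
  have hpne : p ≠ 0 := smul_ne_zero (inv_ne_zero hβ0.ne') hkne
  have hdp : star d * d = β • p := by
    rw [hpdef, smul_smul, mul_inv_cancel₀ hβ0.ne', one_smul]
  obtain ⟨x, hx⟩ := hmin p hpne hpsa hpidem
  have key : ∃ z : B, IsSelfAdjoint z ∧ ∀ r : ℝ, p * z * p ≠ (r : ℂ) • p := by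
    by_cases hu : ∃ r : ℝ, p * (x + star x) * p = (r : ℂ) • p
    · refine ⟨Complex.I • (x - star x), ?_, ?_⟩
      · rw [IsSelfAdjoint, star_smul, Complex.star_def, Complex.conj_I, star_sub, star_star,
          neg_smul, ← smul_neg, neg_sub]
      · intro r hr
        obtain ⟨ru, hru⟩ := hu
        apply hx ((ru - Complex.I * r) / 2)
        have hv : p * (Complex.I • (x - star x)) * p
            = Complex.I • (p * x * p - p * star x * p) := by
          simp only [mul_smul_comm, smul_mul_assoc, mul_sub, sub_mul]
        have hu' : p * x * p + p * star x * p = (ru : ℂ) • p := by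
          have : p * (x + star x) * p = p * x * p + p * star x * p := by noncomm_ring
          rw [← this]; exact hru
        rw [hv] at hr
        have h1 : p * x * p - p * star x * p = (-Complex.I * r) • p := by
          have h2 := congrArg (fun a => (-Complex.I) • a) hr
          simp only [smul_smul] at h2
          rw [show -Complex.I * Complex.I = 1 by
            rw [neg_mul, Complex.I_mul_I, neg_neg], one_smul] at h2
          rw [h2, neg_mul]
        have h2 : (2:ℂ) • (p * x * p) = ((ru:ℂ) + -Complex.I * r) • p := by
          rw [two_smul, add_smul]
          calc p * x * p + p * x * p
              = (p * x * p + p * star x * p) + (p * x * p - p * star x * p) := by abel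
            _ = (ru:ℂ) • p + (-Complex.I * r) • p := by rw [hu', h1]
        calc p * x * p = (2:ℂ)⁻¹ • ((2:ℂ) • (p * x * p)) := by
              rw [smul_smul]; norm_num
          _ = ((ru - Complex.I * r) / 2) • p := by
              rw [h2, smul_smul]; congr 1; ring
    · push_neg at hu
      exact ⟨x + star x, by rw [IsSelfAdjoint, star_add, star_star, add_comm], hu⟩
  obtain ⟨z, hzsa, hz⟩ := key
  set y : B := p * z * p with hydef
  have hysa : IsSelfAdjoint y := by
    rw [IsSelfAdjoint, hydef]
    simp [star_mul, hpsa.star_eq, hzsa.star_eq, mul_assoc]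
  have hyp : y * p = y := by rw [hydef, mul_assoc, mul_assoc, hpidem.eq, ← mul_assoc]
  have hpy : p * y = y := by rw [hydef, ← mul_assoc, ← mul_assoc, hpidem.eq]
  set m : B := y + ‖y‖ • p with hmdef
  have hm0 : 0 ≤ m := by
    have h1 : star p * (-y) * p ≤ ‖(-y)‖ • (star p * p) :=
      CStarAlgebra.star_left_conjugate_le_norm_smul hysa.neg
    rw [hpsa.star_eq, norm_neg, mul_neg, hpy, neg_mul, hyp, hpidem.eq] at h1
    have h3 := add_le_add_left h1 y
    rwa [neg_add_cancel, add_comm] at h3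
  have hmsa : IsSelfAdjoint m := by
    rw [IsSelfAdjoint, hmdef, star_add, hysa.star_eq, star_smul, star_trivial, hpsa.star_eq]
  have hmp : m * p = m := by rw [hmdef, add_mul, hyp, smul_mul_assoc, hpidem.eq]
  have hpm : p * m = m := by rw [hmdef, mul_add, hpy, mul_smul_comm, hpidem.eq]
  have hcoe : ∀ (r : ℝ) (v : B), (r : ℂ) • v = r • v := fun r v => by
    rw [← algebraMap_smul (A := ℂ) (R := ℝ), Complex.coe_algebraMap]
  have hmne : ∀ r : ℝ, m ≠ r • p := by
    intro r hr
    apply hz (r - ‖y‖)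
    rw [show (((r - ‖y‖ : ℝ)) : ℂ) = ((r : ℝ) : ℂ) - ((‖y‖ : ℝ) : ℂ) by push_cast; ring]
    rw [show ((r:ℝ):ℂ) - ((‖y‖:ℝ):ℂ) = (((r - ‖y‖):ℝ):ℂ) by push_cast; ring, hcoe]
    have h4 : y = r • p - ‖y‖ • p := by
      have h5 : y + ‖y‖ • p = r • p := by rw [← hmdef]; exact hr
      exact eq_sub_of_add_eq h5
    rw [sub_smul]
    exact h4
  have hmne0 : m ≠ 0 := fun h => hmne 0 (by rw [h, zero_smul])
  set γ : ℝ := ‖m‖ with hγdef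
  have hγ0 : 0 < γ := norm_pos_iff.mpr hmne0
  have hγσ : γ ∈ quasispectrum ℝ m := stmt12_norm_mem hm0
  by_cases hB1 : ∃ μ ∈ quasispectrum ℝ m, 0 < μ ∧ μ < γ
  · obtain ⟨μ, hμσ, hμ0, hμγ⟩ := hB1
    obtain ⟨f, g, hfc, hgc, hf0, hg0, hfnn, hgnn, hfg, hfμ, hgγ, hfle, hgle⟩ :=
      stmt12_fg hμ0 hμγ
    set e : B := cfcₙ f m with hedef
    set e' : B := cfcₙ g m with he'def
    have he : 0 ≤ e := cfcₙ_nonneg (fun x _ => hfnn x)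
    have he' : 0 ≤ e' := cfcₙ_nonneg (fun x _ => hgnn x)
    have hene : e ≠ 0 := by
      intro h
      have := stmt12_vanish hmsa hfc hf0 h hμσ
      exact absurd this hfμ.ne'
    have he'ne : e' ≠ 0 := by
      intro h
      have := stmt12_vanish hmsa hgc hg0 h hγσ
      exact absurd this hgγ.ne'
    have h_e'e : e' * e = 0 := by
      rw [he'def, hedef, ← cfcₙ_mul g f m hgc.continuousOn hg0 hfc.continuousOn hf0]
      have h1 : (fun x : ℝ => g x * f x) = fun _ : ℝ => (0:ℝ) := by
        funext x; rw [mul_comm]; exact hfg x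
      rw [h1, cfcₙ_const_zero]
    have hele : e ≤ m := by
      calc e ≤ cfcₙ (fun x : ℝ => x) m := cfcₙ_mono (fun x hx => hfle x
          (quasispectrum_nonneg_of_nonneg m hm0 x hx)) hfc.continuousOn (by fun_prop) hf0 rfl
        _ = m := cfcₙ_id' ℝ m hmsa
    have he'le : e' ≤ m := by
      calc e' ≤ cfcₙ (fun x : ℝ => x) m := cfcₙ_mono (fun x hx => hgle x
          (quasispectrum_nonneg_of_nonneg m hm0 x hx)) hgc.continuousOn (by fun_prop) hg0 rfl
        _ = m := cfcₙ_id' ℝ m hmsa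
    have hep : e * p = e := stmt12_absorb hpsa hpidem hmsa he hele hmp hpm
    have hpe : p * e = e := by
      have h1 := congrArg star hep
      rwa [star_mul, he.isSelfAdjoint.star_eq, hpsa.star_eq] at h1
    have he'p : e' * p = e' := stmt12_absorb hpsa hpidem hmsa he' he'le hmp hpm
    have hpe' : p * e' = e' := by
      have h1 := congrArg star he'p
      rwa [star_mul, he'.isSelfAdjoint.star_eq, hpsa.star_eq] at h1
    exact stmt12_pcase d p e e' β hβ0.ne' hdp he hene he' he'ne h_e'e hep hpe he'p hpe'
  · push_neg at hB1
    have hspec2 : ∀ μ ∈ quasispectrum ℝ m, μ = 0 ∨ μ = γ := by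
      intro μ hμ
      obtain ⟨h1, h2⟩ := stmt12_mem_le hm0 hμ
      rcases eq_or_lt_of_le h1 with h | h
      · exact Or.inl h.symm
      · exact Or.inr (le_antisymm h2 (hB1 μ hμ h))
    have hmm : m * m = γ • m := by
      have h1 : cfcₙ (fun x : ℝ => x * x) m = m * m := by
        rw [cfcₙ_mul (fun x : ℝ => x) (fun x : ℝ => x) m (by fun_prop) rfl (by fun_prop) rfl,
          cfcₙ_id' ℝ m hmsa]
      have h2 : cfcₙ (fun x : ℝ => γ * x) m = γ • m := by
        have h3 : (fun x : ℝ => γ * x) = fun x : ℝ => γ • x := by funext x; simp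
        rw [h3, cfcₙ_smul_id γ m]
      rw [← h1, ← h2]
      refine cfcₙ_congr fun μ hμ => ?_
      rcases hspec2 μ hμ with h | h <;> simp [h]
    set e : B := γ⁻¹ • m with hedef
    have hee : e * e = e := by
      rw [hedef, smul_mul_assoc, mul_smul_comm, hmm, smul_smul, smul_smul]
      congr 1
      field_simp
    have hesa : IsSelfAdjoint e := by
      rw [IsSelfAdjoint, hedef, star_smul, star_trivial, hmsa.star_eq]
    have he : 0 ≤ e := smul_nonneg (by positivity) hm0
    have hene : e ≠ 0 := smul_ne_zero (inv_ne_zero hγ0.ne') hmne0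
    have hep : e * p = e := by rw [hedef, smul_mul_assoc, hmp]
    have hpe : p * e = e := by rw [hedef, mul_smul_comm, hpm]
    set e' : B := p - e with he'def
    have he'sa : IsSelfAdjoint e' := hpsa.sub hesa
    have he'idem : e' * e' = e' := by
      rw [he'def, sub_mul, mul_sub, mul_sub, hpidem.eq, hpe, hep, hee]
      abel
    have he' : 0 ≤ e' := by
      have h1 : e' = star e' * e' := by rw [he'sa.star_eq, he'idem]
      rw [h1]
      exact star_mul_self_nonneg e'
    have he'ne : e' ≠ 0 := by
      intro h
      rw [he'def, sub_eq_zero] at h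
      apply hmne γ
      have h1 : γ • p = m := by rw [h, hedef, smul_smul, mul_inv_cancel₀ hγ0.ne', one_smul]
      exact h1.symm
    have h_e'e : e' * e = 0 := by rw [he'def, sub_mul, hpe, hee, sub_self]
    have he'p : e' * p = e' := by rw [he'def, sub_mul, hpidem.eq, hep]
    have hpe' : p * e' = e' := by rw [he'def, mul_sub, hpidem.eq, hpe]
    exact stmt12_pcase d p e e' β hβ0.ne' hdp he hene he' he'ne h_e'e hep hpe he'p hpe'

lemma stmt12_core
    (hmin : ¬ ∃ p : B, p ≠ 0 ∧ IsSelfAdjoint p ∧ IsIdempotentElem p ∧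
        ∀ x : B, ∃ c : ℂ, p * x * p = c • p)
    (d : B) (hd : d ≠ 0) :
    ∃ E E' : B, 0 ≤ E ∧ 0 ≤ E' ∧ E' * (d * E) = 0 ∧ E * star d ≠ 0 ∧ E' * d ≠ 0 := by
  by_cases hA : ∃ μ ∈ quasispectrum ℝ (star d * d), 0 < μ ∧ μ < ‖star d * d‖
  · exact stmt12_caseA d hA
  · push_neg at hmin hA
    exact stmt12_caseB hmin d hd hA

end Aux

/-- A C*-algebra `B` contains no non-zero projection `p` with `pBp = ℂ·p`
iff for every pair of non-zero positive `a₁, a₂` and every `c ∈ B` there are non-zero positive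
`b₁ ≤ a₁`, `b₂ ≤ a₂` with `b₁ c b₂ = 0`. -/
theorem stmt12 {B : Type*} [NonUnitalCStarAlgebra B] [PartialOrder B] [StarOrderedRing B] :
    (¬ ∃ p : B, p ≠ 0 ∧ IsSelfAdjoint p ∧ IsIdempotentElem p ∧
        ∀ x : B, ∃ c : ℂ, p * x * p = c • p) ↔
    (∀ a₁ a₂ : B, 0 ≤ a₁ → a₁ ≠ 0 → 0 ≤ a₂ → a₂ ≠ 0 → ∀ c : B,
        ∃ b₁ b₂ : B, 0 ≤ b₁ ∧ b₁ ≠ 0 ∧ 0 ≤ b₂ ∧ b₂ ≠ 0 ∧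
          b₁ * c * b₂ = 0 ∧ b₁ ≤ a₁ ∧ b₂ ≤ a₂) := by
  constructor
  · intro hmin a₁ a₂ ha₁ ha₁n ha₂ ha₂n c
    by_cases hd : a₁ * c * a₂ = 0
    · exact ⟨a₁, a₂, ha₁, ha₁n, ha₂, ha₂n, hd, le_refl _, le_refl _⟩
    · obtain ⟨E, E', hE, hE', hEdE, hEsd, hE'd⟩ := stmt12_core hmin (a₁ * c * a₂) hd
      have hE'a₁ : a₁ * E' * a₁ ≠ 0 := by
        intro h
        have h1 : E' * a₁ = 0 := stmt12_cancel hE' (by rwa [ha₁.isSelfAdjoint.star_eq])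
        apply hE'd
        calc E' * (a₁ * c * a₂) = (E' * a₁) * (c * a₂) := by noncomm_ring
          _ = 0 := by rw [h1, zero_mul]
      have hEa₂ : a₂ * E * a₂ ≠ 0 := by
        intro h
        have h1 : E * a₂ = 0 := stmt12_cancel hE (by rwa [ha₂.isSelfAdjoint.star_eq])
        apply hEsd
        have hsd : star (a₁ * c * a₂) = a₂ * (star c * a₁) := by
          rw [star_mul, star_mul, ha₁.isSelfAdjoint.star_eq, ha₂.isSelfAdjoint.star_eq]
        calc E * star (a₁ * c * a₂) = (E * a₂) * (star c * a₁) := by rw [hsd, ← mul_assoc]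
          _ = 0 := by rw [h1, zero_mul]
      obtain ⟨r₁, hr₁, hb₁le⟩ := stmt12_shrink ha₁ hE' hE'a₁
      obtain ⟨r₂, hr₂, hb₂le⟩ := stmt12_shrink ha₂ hE hEa₂
      refine ⟨r₁ • (a₁ * E' * a₁), r₂ • (a₂ * E * a₂), ?_, ?_, ?_, ?_, ?_, hb₁le, hb₂le⟩
      · refine smul_nonneg hr₁.le ?_
        have h1 := star_left_conjugate_nonneg hE' a₁
        rwa [ha₁.isSelfAdjoint.star_eq] at h1
      · exact smul_ne_zero hr₁.ne' hE'a₁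
      · refine smul_nonneg hr₂.le ?_
        have h1 := star_left_conjugate_nonneg hE a₂
        rwa [ha₂.isSelfAdjoint.star_eq] at h1
      · exact smul_ne_zero hr₂.ne' hEa₂
      · calc (r₁ • (a₁ * E' * a₁)) * c * (r₂ • (a₂ * E * a₂))
            = (r₁ * r₂) • ((a₁ * E' * a₁) * c * (a₂ * E * a₂)) := by
              rw [smul_mul_assoc, smul_mul_assoc, mul_smul_comm, smul_smul]
          _ = (r₁ * r₂) • (a₁ * (E' * (a₁ * c * a₂ * E)) * a₂) := by
              rw [show (a₁ * E' * a₁) * c * (a₂ * E * a₂)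
                  = a₁ * (E' * (a₁ * c * a₂ * E)) * a₂ from by noncomm_ring]
          _ = 0 := by rw [hEdE, mul_zero, zero_mul, smul_zero]
  · rintro h ⟨p, hp0, hpsa, hpidem, hmin⟩
    have hp : 0 ≤ p := by
      have h1 : p = star p * p := by rw [hpsa.star_eq, hpidem.eq]
      rw [h1]
      exact star_mul_self_nonneg p
    obtain ⟨b₁, b₂, hb₁, hb₁n, hb₂, hb₂n, hbz, hb₁le, hb₂le⟩ := h p p hp hp0 hp hp0 p
    have habs₁ : b₁ * p = b₁ := stmt12_absorb hpsa hpidem hpsa hb₁ hb₁le hpidem.eq hpidem.eq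
    have habs₂ : b₂ * p = b₂ := stmt12_absorb hpsa hpidem hpsa hb₂ hb₂le hpidem.eq hpidem.eq
    have hpb₁ : p * b₁ = b₁ := by
      have h1 := congrArg star habs₁
      rwa [star_mul, hb₁.isSelfAdjoint.star_eq, hpsa.star_eq] at h1
    obtain ⟨c₁, hc₁⟩ := hmin b₁
    obtain ⟨c₂, hc₂⟩ := hmin b₂
    rw [hpb₁, habs₁] at hc₁
    have hb₂eq : b₂ = c₂ • p := by
      have h1 := congrArg star habs₂
      rw [star_mul, hb₂.isSelfAdjoint.star_eq, hpsa.star_eq] at h1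
      rw [h1, habs₂] at hc₂
      exact hc₂
    have hb₁eq : b₁ = c₁ • p := hc₁
    have hc₁0 : c₁ ≠ 0 := fun hz => hb₁n (by rw [hb₁eq, hz, zero_smul])
    have hc₂0 : c₂ ≠ 0 := fun hz => hb₂n (by rw [hb₂eq, hz, zero_smul])
    rw [hb₁eq, hb₂eq] at hbz
    have h2 : (c₁ * c₂) • p = 0 := by
      rw [← hbz, smul_mul_assoc, smul_mul_assoc, mul_smul_comm, smul_smul, hpidem.eq,
        hpidem.eq]
    rcases smul_eq_zero.mp h2 with h3 | h3
    · exact mul_ne_zero hc₁0 hc₂0 h3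
    · exact hp0 h3
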